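/- Let χ be a Killing vector field of a spacetime (M,g), let A be a one-form satisfying L_χ A = 0, and let N be a null hypersurface (Killing horizon) on which χ is null and to which χ is tangent, such that every vector t tangent to N satisfies t = f χ for some function f along the generators (i.e., tangent vectors to N are proportional to χ on N). Then the function Φ = −A_μ χ^μ is constant on each connected component of N. -/

import Mathlib

/-- Partial derivative of a function on `ℝⁿ` in the `i`-th coordinate direction. -/
noncomputable def pd {n : ℕ} (i : Fin n) (f : (Fin n → ℝ) → ℝ) (p : Fin n → ℝ) : ℝ :=
  fderiv ℝ f p (Pi.single i 1)

lemma clm_apply_eq_sum {n : ℕ} (L : (Fin n → ℝ) →L[ℝ] ℝ) (v : Fin n → ℝ) :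
    L v = ∑ i, v i * L (Pi.single i 1) := by
  conv_lhs => rw [← Finset.univ_sum_single v]
  rw [map_sum]
  refine Finset.sum_congr rfl fun i _ => ?_
  have h1 : Pi.single i (v i) = v i • (Pi.single i (1:ℝ) : Fin n → ℝ) := by
    rw [← Pi.single_smul, smul_eq_mul, mul_one]
  rw [h1, map_smul, smul_eq_mul]

/-- Let `χ` be a Killing vector field of `(M,g)` (`L_χ g = 0`), `A` a
one-form with `L_χ A = 0`, and `N` a null hypersurface (Killing horizon) on which `χ`
is null and tangent, such that every vector tangent to `N` is proportional to `χ`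
(hypothesis `htangent`, phrased via differentiable curves lying in `N`). Then
`Φ = −A_μχ^μ` is constant on each connected component of `N` (phrased as: `Φ` is
constant along every differentiable curve lying in `N`). -/
theorem stmt_5 (n : ℕ)
    (g : Fin n → Fin n → (Fin n → ℝ) → ℝ)
    (χ A : Fin n → (Fin n → ℝ) → ℝ)
    (hgdiff : ∀ μ ν, Differentiable ℝ (g μ ν))
    (hχdiff : ∀ μ, Differentiable ℝ (χ μ))
    (hAdiff : ∀ μ, Differentiable ℝ (A μ))
    (hKilling : ∀ μ ν p,
      (∑ ρ, (χ ρ p * pd ρ (g μ ν) p + g ρ ν p * pd μ (χ ρ) p + g μ ρ p * pd ν (χ ρ) p)) = 0)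
    (hLA : ∀ μ p, (∑ ρ, (χ ρ p * pd ρ (A μ) p + A ρ p * pd μ (χ ρ) p)) = 0)
    (N : Set (Fin n → ℝ))
    (hnull : ∀ p ∈ N, (∑ μ, ∑ ν, g μ ν p * χ μ p * χ ν p) = 0)
    (htangent : ∀ c : ℝ → (Fin n → ℝ), (∀ s, c s ∈ N) →
      (∀ μ, Differentiable ℝ (fun s => c s μ)) →
      ∀ s : ℝ, ∃ f : ℝ, ∀ μ, deriv (fun u => c u μ) s = f * χ μ (c s)) :
    ∀ c : ℝ → (Fin n → ℝ), (∀ s, c s ∈ N) →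
      (∀ μ, Differentiable ℝ (fun s => c s μ)) →
      ∀ s t : ℝ,
        -(∑ μ, A μ (c s) * χ μ (c s)) = -(∑ μ, A μ (c t) * χ μ (c t)) := by
  intro c hcN hcdiff s t
  have hc : Differentiable ℝ c := differentiable_pi.mpr hcdiff
  set G : ℝ → ℝ := fun u => ∑ μ, A μ (c u) * χ μ (c u) with hGdef
  have hG' : ∀ u, HasDerivAt G 0 u := by
    intro u
    obtain ⟨f, hf⟩ := htangent c hcN hcdiff u
    set p := c u with hp
    set v : Fin n → ℝ := fun ρ => f * χ ρ p with hv
    have hcd : HasDerivAt c v u := by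
      rw [hasDerivAt_pi]
      intro μ
      have h := ((hcdiff μ) u).hasDerivAt
      rw [hf μ] at h
      exact h
    have hA' : ∀ μ, HasDerivAt (fun x => A μ (c x)) (∑ ρ, v ρ * pd ρ (A μ) p) u := by
      intro μ
      have h1 := ((hAdiff μ p).hasFDerivAt).comp_hasDerivAt u hcd
      rw [clm_apply_eq_sum] at h1
      exact h1
    have hχ' : ∀ μ, HasDerivAt (fun x => χ μ (c x)) (∑ ρ, v ρ * pd ρ (χ μ) p) u := by
      intro μ
      have h1 := ((hχdiff μ p).hasFDerivAt).comp_hasDerivAt u hcd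
      rw [clm_apply_eq_sum] at h1
      exact h1
    have hsum : HasDerivAt G
        (∑ μ, ((∑ ρ, v ρ * pd ρ (A μ) p) * χ μ p + A μ p * (∑ ρ, v ρ * pd ρ (χ μ) p))) u :=
      HasDerivAt.fun_sum (fun μ _ => (hA' μ).mul (hχ' μ))
    have hLA' : ∀ μ, (∑ ρ, χ ρ p * pd ρ (A μ) p) = -∑ ρ, A ρ p * pd μ (χ ρ) p := by
      intro μ
      have h := hLA μ p
      rw [Finset.sum_add_distrib] at h
      linarith
    have h2 : (∑ μ, ∑ ρ, A μ p * (v ρ * pd ρ (χ μ) p))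
        = ∑ μ, ∑ ρ, χ μ p * (f * (A ρ p * pd μ (χ ρ) p)) := by
      rw [Finset.sum_comm]
      refine Finset.sum_congr rfl fun μ _ => Finset.sum_congr rfl fun ρ _ => ?_
      simp only [hv]; ring
    have hzero : (∑ μ, ((∑ ρ, v ρ * pd ρ (A μ) p) * χ μ p
        + A μ p * (∑ ρ, v ρ * pd ρ (χ μ) p))) = 0 := by
      rw [Finset.sum_add_distrib]
      have e1 : (∑ μ, (∑ ρ, v ρ * pd ρ (A μ) p) * χ μ p)
          = ∑ μ, -(χ μ p * (f * ∑ ρ, A ρ p * pd μ (χ ρ) p)) := by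
        refine Finset.sum_congr rfl fun μ _ => ?_
        have : (∑ ρ, v ρ * pd ρ (A μ) p) = f * ∑ ρ, χ ρ p * pd ρ (A μ) p := by
          rw [Finset.mul_sum]
          exact Finset.sum_congr rfl fun ρ _ => by simp only [hv]; ring
        rw [this, hLA' μ]; ring
      have e2 : (∑ μ, A μ p * (∑ ρ, v ρ * pd ρ (χ μ) p))
          = ∑ μ, χ μ p * (f * ∑ ρ, A ρ p * pd μ (χ ρ) p) := by
        calc (∑ μ, A μ p * (∑ ρ, v ρ * pd ρ (χ μ) p))
            = ∑ μ, ∑ ρ, A μ p * (v ρ * pd ρ (χ μ) p) := by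
              exact Finset.sum_congr rfl fun μ _ => by rw [Finset.mul_sum]
          _ = ∑ μ, ∑ ρ, χ μ p * (f * (A ρ p * pd μ (χ ρ) p)) := h2
          _ = ∑ μ, χ μ p * (f * ∑ ρ, A ρ p * pd μ (χ ρ) p) := by
              refine Finset.sum_congr rfl fun μ _ => ?_
              rw [Finset.mul_sum, Finset.mul_sum]
      rw [e1, e2, ← Finset.sum_add_distrib]
      simp
    rw [← hzero]
    exact hsum
  have hGdiff : Differentiable ℝ G := fun u => (hG' u).differentiableAt
  have hGderiv : ∀ u, deriv G u = 0 := fun u => (hG' u).deriv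
  have := is_const_of_deriv_eq_zero hGdiff hGderiv s t
  simp only [hGdef] at this
  rw [this]
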